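/- Let A, B ∈ 𝔽^{4×4} be such that all off-diagonal entries of A are nonzero and A ≡PME B. Let X ⊆ {1,2,3,4} with |X| = 2 be such that D₁(A,B) = X and D₂(A,B) = X̄. Then X is a cut of A. -/

import Mathlib

namespace PMAP

open Matrix

variable {K : Type*}

/-- The submatrix of a square matrix `A` with rows indexed by `S` and columns indexed by `T`. -/
def subm {m : Type*} (A : Matrix m m K) (S T : Finset m) : Matrix S T K :=
  Matrix.of fun i j => A i.1 j.1

/-- The principal minor of `A` indexed by `S`. -/
noncomputable def pminor {m : Type*} [DecidableEq m] [CommRing K]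
    (A : Matrix m m K) (S : Finset m) : K :=
  (subm A S S).det

/-- `A` and `B` are principal minor equivalent. -/
def PME {m : Type*} [DecidableEq m] [CommRing K] (A B : Matrix m m K) : Prop :=
  ∀ S : Finset m, S.Nonempty → pminor A S = pminor B S

/-- `A` and `B` are principal minor equivalent up to order `k`. -/
def PMEupto {m : Type*} [DecidableEq m] [CommRing K] (k : ℕ) (A B : Matrix m m K) : Prop :=
  ∀ S : Finset m, S.Nonempty → S.card ≤ k → pminor A S = pminor B S

/-- `X` is a cut of the principal submatrix `A[I]`. -/
def IsCutOn {m : Type*} [DecidableEq m] [Field K] (A : Matrix m m K) (I X : Finset m) : Prop :=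
  X ⊆ I ∧ 2 ≤ X.card ∧ X.card + 2 ≤ I.card ∧
    (subm A X (I \ X)).rank ≤ 1 ∧ (subm A (I \ X) X).rank ≤ 1

/-- `X` is a cut of `A`. -/
def IsCut {m : Type*} [Fintype m] [DecidableEq m] [Field K] (A : Matrix m m K)
    (X : Finset m) : Prop :=
  IsCutOn A Finset.univ X

/-- Property `R`: all off-diagonal entries are nonzero, and every rank-one `2×2`
submatrix `A[{i,j},{k,ℓ}]` (with `i,j,k,ℓ` distinct) extends to a rank-one submatrix
`A[X, Xᶜ]` with `i,j ∈ X` and `k,ℓ ∈ Xᶜ`. -/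
def PropR {m : Type*} [Fintype m] [DecidableEq m] [Field K] (A : Matrix m m K) : Prop :=
  (∀ i j : m, i ≠ j → A i j ≠ 0) ∧
    ∀ i j k l : m, i ≠ j → i ≠ k → i ≠ l → j ≠ k → j ≠ l → k ≠ l →
      (subm A {i, j} {k, l}).rank = 1 →
      ∃ X : Finset m, i ∈ X ∧ j ∈ X ∧ k ∉ X ∧ l ∉ X ∧ (subm A X Xᶜ).rank = 1

/-- `A` is diagonally similar to `B`: `B = D⁻¹ A D` for an invertible diagonal matrix `D`. -/
def DiagSim {m : Type*} [Field K] (A B : Matrix m m K) : Prop :=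
  ∃ D : m → K, (∀ i, D i ≠ 0) ∧ ∀ i j, B i j = (D i)⁻¹ * A i j * D j

/-- The set `D₁(A,B)` of indices `i` with `A[[n]∖{i}]` diagonally similar to `B[[n]∖{i}]`. -/
def D1 {n : ℕ} [Field K] (A B : Matrix (Fin n) (Fin n) K) : Set (Fin n) :=
  {i | DiagSim (subm A {i}ᶜ {i}ᶜ) (subm B {i}ᶜ {i}ᶜ)}

/-- The set `D₂(A,B)` of indices `i` with `A[[n]∖{i}]` diagonally similar to `B[[n]∖{i}]ᵀ`. -/
def D2 {n : ℕ} [Field K] (A B : Matrix (Fin n) (Fin n) K) : Set (Fin n) :=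
  {i | DiagSim (subm A {i}ᶜ {i}ᶜ) (subm B {i}ᶜ {i}ᶜ)ᵀ}

/-- The pair `{{i,j},{k,l}}` satisfies property `P` for `A`: there is a matrix `C`
principal minor equivalent to `A[{i,j,k,l}]` in which `{i,j}` is a cut. -/
def PropP {n : ℕ} [Field K] (A : Matrix (Fin n) (Fin n) K) (i j k l : Fin n) : Prop :=
  ∃ C : Matrix (Fin n) (Fin n) K,
    (∀ S : Finset (Fin n), S.Nonempty → S ⊆ {i, j, k, l} → pminor C S = pminor A S) ∧
    IsCutOn C {i, j, k, l} {i, j}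

/-- `A` is irreducible: it cannot be brought to block upper triangular form
by a simultaneous permutation of rows and columns. -/
def Irred {m : Type*} [Fintype m] [Zero K] (A : Matrix m m K) : Prop :=
  ∀ S : Finset m, S.Nonempty → S ≠ Finset.univ → ∃ i, i ∉ S ∧ ∃ j ∈ S, A i j ≠ 0



section Helpers

variable [Field K]

private lemma det_four' (M : Matrix (Fin 4) (Fin 4) K) : M.det =
    M 0 3*M 1 2*M 2 1*M 3 0 - M 0 3*M 1 2*M 2 0*M 3 1 - M 0 3*M 1 1*M 2 2*M 3 0 + M 0 3*M 1 1*M 2 0*M 3 2 + M 0 3*M 1 0*M 2 2*M 3 1 - M 0 3*M 1 0*M 2 1*M 3 2 - M 0 2*M 1 3*M 2 1*M 3 0 + M 0 2*M 1 3*M 2 0*M 3 1 + M 0 2*M 1 1*M 2 3*M 3 0 - M 0 2*M 1 1*M 2 0*M 3 3 - M 0 2*M 1 0*M 2 3*M 3 1 + M 0 2*M 1 0*M 2 1*M 3 3 + M 0 1*M 1 3*M 2 2*M 3 0 - M 0 1*M 1 3*M 2 0*M 3 2 - M 0 1*M 1 2*M 2 3*M 3 0 + M 0 1*M 1 2*M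 2 0*M 3 3 + M 0 1*M 1 0*M 2 3*M 3 2 - M 0 1*M 1 0*M 2 2*M 3 3 - M 0 0*M 1 3*M 2 2*M 3 1 + M 0 0*M 1 3*M 2 1*M 3 2 + M 0 0*M 1 2*M 2 3*M 3 1 - M 0 0*M 1 2*M 2 1*M 3 3 - M 0 0*M 1 1*M 2 3*M 3 2 + M 0 0*M 1 1*M 2 2*M 3 3 := by
  simp [Matrix.det_succ_row_zero, Fin.sum_univ_succ, Fin.succAbove,
    show ((2:Fin 3).succ : Fin 4) = 3 from rfl, show (Fin.castSucc (2:Fin 3) : Fin 4) = 2 from rfl]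
  ring

private lemma rank_le_one_of_factor {m' n' : Type*} [Fintype m'] [Fintype n']
    (M : Matrix m' n' K) (u : m' → K) (v : n' → K) (h : ∀ p q, M p q = u p * v q) :
    M.rank ≤ 1 := by
  have hM : M = (Matrix.of fun p (_ : Unit) => u p) * (Matrix.of fun (_ : Unit) q => v q) := by
    ext p q; simp [Matrix.mul_apply, h p q]
  rw [hM]
  refine (Matrix.rank_mul_le_right _ _).trans ((Matrix.rank_le_card_height _).trans ?_)
  simp

private lemma DiagSim.submatrix' {m n : Type*} {M N : Matrix m m K} (h : DiagSim M N)
    (f : n → m) : DiagSim (M.submatrix f f) (N.submatrix f f) := by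
  obtain ⟨d, hd, he⟩ := h
  exact ⟨d ∘ f, fun i => hd _, fun i j => he (f i) (f j)⟩

private lemma DiagSim.of_equiv {m n : Type*} {M N : Matrix m m K} (e : n ≃ m)
    (h : DiagSim (M.submatrix e e) (N.submatrix e e)) : DiagSim M N := by
  obtain ⟨d, hd, he⟩ := h
  refine ⟨d ∘ e.symm, fun i => hd _, fun i j => ?_⟩
  simpa using he (e.symm i) (e.symm j)

private lemma DiagSim.cycle' {m : Type*} {M N : Matrix m m K} (h : DiagSim M N) (x y z : m) :
    N x y * N y z * N z x = M x y * M y z * M z x := by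
  obtain ⟨d, hd, he⟩ := h
  rw [he, he, he]
  field_simp [hd x, hd y, hd z]

private noncomputable def finsetEquiv {k : ℕ} {n : Type*} [Fintype n] [DecidableEq n]
    (S : Finset n) (f : Fin k → n)
    (hmem : ∀ x, f x ∈ S) (hinj : Function.Injective f) (hcard : S.card = k) :
    Fin k ≃ ↥S :=
  Equiv.ofBijective (fun x => ⟨f x, hmem x⟩) (by
    rw [Fintype.bijective_iff_injective_and_card]
    exact ⟨fun x y hxy => hinj (congrArg Subtype.val hxy), by simp [Fintype.card_coe, hcard]⟩)

private lemma pminor_eq {k : ℕ} {n : Type*} [Fintype n] [DecidableEq n] (A : Matrix n n K)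
    (S : Finset n) (f : Fin k → n)
    (hmem : ∀ x, f x ∈ S) (hinj : Function.Injective f) (hcard : S.card = k) :
    pminor A S = (A.submatrix f f).det := by
  rw [pminor, ← Matrix.det_submatrix_equiv_self (finsetEquiv S f hmem hinj hcard) (subm A S S)]
  rfl

private lemma diagSim_transpose_aux (M N : Matrix (Fin 3) (Fin 3) K)
    (h01 : M 0 1 ≠ 0) (h02 : M 0 2 ≠ 0) (h10 : M 1 0 ≠ 0)
    (h20 : M 2 0 ≠ 0)
    (hcyc : M 0 1 * M 1 2 * M 2 0 = M 0 2 * M 2 1 * M 1 0)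
    (h : DiagSim M N) : DiagSim M Nᵀ := by
  obtain ⟨d, hd, he⟩ := h
  have n0 : (d 0)⁻¹ ≠ 0 := inv_ne_zero (hd 0)
  have n1 : M 1 0 / (M 0 1 * d 1) ≠ 0 := div_ne_zero h10 (mul_ne_zero h01 (hd 1))
  have n2 : M 2 0 / (M 0 2 * d 2) ≠ 0 := div_ne_zero h20 (mul_ne_zero h02 (hd 2))
  have hd0 := hd 0; have hd1 := hd 1; have hd2 := hd 2
  have E00 : N 0 0 = ((d 0)⁻¹)⁻¹ * M 0 0 * (d 0)⁻¹ := by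
    rw [he 0 0]; field_simp
  have E11 : N 1 1 = (M 1 0 / (M 0 1 * d 1))⁻¹ * M 1 1 * (M 1 0 / (M 0 1 * d 1)) := by
    rw [he 1 1]; field_simp; try ring
  have E22 : N 2 2 = (M 2 0 / (M 0 2 * d 2))⁻¹ * M 2 2 * (M 2 0 / (M 0 2 * d 2)) := by
    rw [he 2 2]; field_simp; try ring
  have E01 : N 1 0 = ((d 0)⁻¹)⁻¹ * M 0 1 * (M 1 0 / (M 0 1 * d 1)) := by
    rw [he 1 0]; field_simp; try ring
  have E10 : N 0 1 = (M 1 0 / (M 0 1 * d 1))⁻¹ * M 1 0 * (d 0)⁻¹ := by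
    rw [he 0 1]; field_simp; try ring
  have E02 : N 2 0 = ((d 0)⁻¹)⁻¹ * M 0 2 * (M 2 0 / (M 0 2 * d 2)) := by
    rw [he 2 0]; field_simp; try ring
  have E20 : N 0 2 = (M 2 0 / (M 0 2 * d 2))⁻¹ * M 2 0 * (d 0)⁻¹ := by
    rw [he 0 2]; field_simp; try ring
  have E12 : N 2 1 = (M 1 0 / (M 0 1 * d 1))⁻¹ * M 1 2 * (M 2 0 / (M 0 2 * d 2)) := by
    rw [he 2 1]; field_simp
    linear_combination (-1 : K) * hcyc
  have E21 : N 1 2 = (M 2 0 / (M 0 2 * d 2))⁻¹ * M 2 1 * (M 1 0 / (M 0 1 * d 1)) := by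
    rw [he 1 2]; field_simp
    linear_combination hcyc
  refine ⟨![(d 0)⁻¹, M 1 0 / (M 0 1 * d 1), M 2 0 / (M 0 2 * d 2)], ?_, ?_⟩
  · intro x
    fin_cases x
    · exact n0
    · exact n1
    · exact n2
  · intro x y
    fin_cases x <;> fin_cases y
    · exact E00
    · exact E01
    · exact E02
    · exact E10
    · exact E11
    · exact E12
    · exact E20
    · exact E21
    · exact E22

private lemma inj2 {α : Type*} {p q : α} (h : p ≠ q) : Function.Injective ![p, q] := by
  intro x y hxy
  fin_cases x <;> fin_cases y <;> simp_all

private lemma inj3 {α : Type*} {p q r : α} (hpq : p ≠ q) (hpr : p ≠ r) (hqr : q ≠ r) :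
    Function.Injective ![p, q, r] := by
  intro x y hxy
  fin_cases x <;> fin_cases y <;> simp_all

private lemma inj4 {α : Type*} {p q r s : α} (hpq : p ≠ q) (hpr : p ≠ r) (hps : p ≠ s)
    (hqr : q ≠ r) (hqs : q ≠ s) (hrs : r ≠ s) :
    Function.Injective ![p, q, r, s] := by
  intro x y hxy
  fin_cases x <;> fin_cases y <;> simp_all

private lemma core (a00 a01 a02 a03 a10 a11 a12 a13 a20 a21 a22 a23 a30 a31 a32 a33 b00 b01 b02 b03 b10 b11 b12 b13 b20 b21 b22 b23 b30 b31 b32 b33 : K)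
    (ha01 : a01 ≠ 0)
    (ha02 : a02 ≠ 0)
    (ha03 : a03 ≠ 0)
    (ha10 : a10 ≠ 0)
    (ha12 : a12 ≠ 0)
    (ha13 : a13 ≠ 0)
    (ha20 : a20 ≠ 0)
    (ha21 : a21 ≠ 0)
    (ha23 : a23 ≠ 0)
    (ha30 : a30 ≠ 0)
    (ha31 : a31 ≠ 0)
    (ha32 : a32 ≠ 0)
    (hd0 : b00 = a00)
    (hd1 : b11 = a11)
    (hd2 : b22 = a22)
    (hd3 : b33 = a33)
    (hp01 : b01*b10 = a01*a10)
    (hp02 : b02*b20 = a02*a20)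
    (hp03 : b03*b30 = a03*a30)
    (hp12 : b12*b21 = a12*a21)
    (hp13 : b13*b31 = a13*a31)
    (hp23 : b23*b32 = a23*a32)
    (ho0 : b12*b23*b31 = a12*a23*a31)
    (ho0p : b13*b32*b21 = a13*a32*a21)
    (ho1 : b02*b23*b30 = a02*a23*a30)
    (ho1p : b03*b32*b20 = a03*a32*a20)
    (ho2 : b10*b03*b31 = a01*a13*a30)
    (ho2p : b30*b01*b13 = a03*a31*a10)
    (ho3 : b10*b02*b21 = a01*a12*a20)
    (ho3p : b20*b01*b12 = a02*a21*a10)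
    (hdet : a03*a12*a21*a30 - a03*a12*a20*a31 - a03*a11*a22*a30 + a03*a11*a20*a32 + a03*a10*a22*a31 - a03*a10*a21*a32 - a02*a13*a21*a30 + a02*a13*a20*a31 + a02*a11*a23*a30 - a02*a11*a20*a33 - a02*a10*a23*a31 + a02*a10*a21*a33 + a01*a13*a22*a30 - a01*a13*a20*a32 - a01*a12*a23*a30 + a01*a12*a20*a33 + a01*a10*a23*a32 - a01*a10*a22*a33 - a00*a13*a22*a31 + a00*a13*a21*a32 + a00*a12*a23*a31 - a00*a12*a21*a33 - a00*a11*a23*a32 + a00*a11*a22*a33 = b03*b12*b21*b30 - b03*b12*b20*b31 - b03*b11*b22*b30 + b03*b11*b20*b32 + b03*b10*b22*b31 - b03*b10*b21*b32 - b02*b13*b21*b30 + b02*b13*b20*b31 + b02*b11*b23*b30 - b02*b11*b20*b33 - b02*b10*b23*b31 + b02*b10*b21*b33 + b01*b13*b22*b30 - b01*b13*b20*b32 - b01*b12*b23*b30 + b01*b12*b20*b33 + b01*b10*b23*b32 - b01*b10*b22*b33 - b00*b13*b22*b31 + b00*b13*b21*b32 + b00*b12*b23*b31 - b00*b12*b21*b33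 - b00*b11*b23*b32 + b00*b11*b22*b33)
    (hnc : a12*a23*a31 ≠ a13*a32*a21)
    (hn2 : a01*a13*a30 ≠ a03*a31*a10) :
    a02*a13 = a03*a12 ∧ a20*a31 = a30*a21 := by
  have hb01 : b01 ≠ 0 := by
    intro h; exact (mul_ne_zero ha01 ha10) (by rw [← hp01, h]; ring)
  have hb10 : b10 ≠ 0 := by
    intro h; exact (mul_ne_zero ha01 ha10) (by rw [← hp01, h]; ring)
  have hb02 : b02 ≠ 0 := by
    intro h; exact (mul_ne_zero ha02 ha20) (by rw [← hp02, h]; ring)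
  have hb20 : b20 ≠ 0 := by
    intro h; exact (mul_ne_zero ha02 ha20) (by rw [← hp02, h]; ring)
  have hb03 : b03 ≠ 0 := by
    intro h; exact (mul_ne_zero ha03 ha30) (by rw [← hp03, h]; ring)
  have hb30 : b30 ≠ 0 := by
    intro h; exact (mul_ne_zero ha03 ha30) (by rw [← hp03, h]; ring)
  have hb12 : b12 ≠ 0 := by
    intro h; exact (mul_ne_zero ha12 ha21) (by rw [← hp12, h]; ring)
  have hb21 : b21 ≠ 0 := by
    intro h; exact (mul_ne_zero ha12 ha21) (by rw [← hp12, h]; ring)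
  have hb13 : b13 ≠ 0 := by
    intro h; exact (mul_ne_zero ha13 ha31) (by rw [← hp13, h]; ring)
  have hb31 : b31 ≠ 0 := by
    intro h; exact (mul_ne_zero ha13 ha31) (by rw [← hp13, h]; ring)
  have hb23 : b23 ≠ 0 := by
    intro h; exact (mul_ne_zero ha23 ha32) (by rw [← hp23, h]; ring)
  have hb32 : b32 ≠ 0 := by
    intro h; exact (mul_ne_zero ha23 ha32) (by rw [← hp23, h]; ring)
  have hk1 : b01*b12*b23*b30*(a13*a31) = a03*a10*a12*a23*a31*a31 := by
    apply mul_right_cancel₀ (mul_ne_zero hb13 hb31)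
    linear_combination (b12*a13*b23*a31*b31)*ho2p + (a03*a10*a13*a31*a31)*ho0 - (a03*a10*a12*a23*a31*a31)*hp13
  have hk2 : b03*b32*b21*b10*(a13*a31) = a01*a13*a13*a21*a30*a32 := by
    apply mul_right_cancel₀ (mul_ne_zero hb13 hb31)
    linear_combination (a13*b13*b21*a31*b32)*ho2 + (a01*a13*a13*a30*a31)*ho0p - (a01*a13*a13*a21*a30*a32)*hp13
  have hk3 : b01*b13*b32*b20*(a12*a21) = a02*a10*a13*a21*a21*a32 := by
    apply mul_right_cancel₀ (mul_ne_zero hb12 hb21)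
    linear_combination (a12*b13*a21*b21*b32)*ho3p + (a02*a10*a12*a21*a21)*ho0p - (a02*a10*a13*a21*a21*a32)*hp12
  have hk4 : b02*b23*b31*b10*(a12*a21) = a01*a12*a12*a20*a23*a31 := by
    apply mul_right_cancel₀ (mul_ne_zero hb12 hb21)
    linear_combination (a12*b12*a21*b23*b31)*ho3 + (a01*a12*a12*a20*a21)*ho0 - (a01*a12*a12*a20*a23*a31)*hp12
  have hk5 : b02*b21*b13*b30*(a23*a32) = a02*a13*a21*a23*a30*a32 := by
    apply mul_right_cancel₀ (mul_ne_zero hb23 hb32)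
    linear_combination (b13*b21*a23*a32*b32)*ho1 + (a02*a23*a23*a30*a32)*ho0p - (a02*a13*a21*a23*a30*a32)*hp23
  have hk6 : b03*b31*b12*b20*(a23*a32) = a03*a12*a20*a23*a31*a32 := by
    apply mul_right_cancel₀ (mul_ne_zero hb23 hb32)
    linear_combination (b12*a23*b23*b31*a32)*ho1p + (a03*a20*a23*a32*a32)*ho0 - (a03*a12*a20*a23*a31*a32)*hp23
  have hk1alt : b01*b12*b23*b30*(a02*a20) = a02*a02*a10*a21*a23*a30 := by
    apply mul_right_cancel₀ (mul_ne_zero hb02 hb20)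
    linear_combination (a02*b02*a20*b23*b30)*ho3p + (a02*a02*a10*a20*a21)*ho1 - (a02*a02*a10*a21*a23*a30)*hp02
  have he1 : a12*a03*a31*a20 = a02*a30*a21*a13 := by
    apply mul_left_cancel₀ (mul_ne_zero (mul_ne_zero (mul_ne_zero ha23 ha10) ha02) ha31)
    linear_combination (a13*a31)*hk1alt - (a02*a20)*hk1
  have hkey : (a12*a23*a31 - a13*a32*a21) * (a10*a21*a31*(a02*a13 - a03*a12) - a01*a12*a13*(a20*a31 - a30*a21)) * (a23*a32) = 0 := by
    linear_combination (- (a12*a13*a21*a23*a31*a32))*hdet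
      + (a12*a13*a13*a21*b22*a23*a31*a31*a32 - a12*a13*a13*a21*a21*a23*a31*a32*a32 - a12*a12*a13*a21*a23*a23*a31*a31*a32 + a12*a12*a13*a21*a21*a23*a31*a32*b33 + b11*a12*a13*a21*a23*a23*a31*a32*a32 - b11*a12*a13*a21*b22*a23*a31*a32*b33)*hd0
      + (a03*a12*a13*a21*b22*a23*a30*a31*a32 - a03*a12*a13*a20*a21*a23*a31*a32*a32 - a02*a12*a13*a21*a23*a23*a30*a31*a32 + a02*a12*a13*a20*a21*a23*a31*a32*b33 + a00*a12*a13*a21*a23*a23*a31*a32*a32 - a00*a12*a13*a21*b22*a23*a31*a32*b33)*hd1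
      + (a03*a11*a12*a13*a21*a23*a30*a31*a32 - a03*a10*a12*a13*a21*a23*a31*a31*a32 - a01*a12*a13*a13*a21*a23*a30*a31*a32 + a01*a10*a12*a13*a21*a23*a31*a32*b33 + a00*a12*a13*a13*a21*a23*a31*a31*a32 - a00*a11*a12*a13*a21*a23*a31*a32*b33)*hd2
      + (a02*a11*a12*a13*a20*a21*a23*a31*a32 - a02*a10*a12*a13*a21*a21*a23*a31*a32 - a01*a12*a12*a13*a20*a21*a23*a31*a32 + a01*a10*a12*a13*a21*a22*a23*a31*a32 + a00*a12*a12*a13*a21*a21*a23*a31*a32 - a00*a11*a12*a13*a21*a22*a23*a31*a32)*hd3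
      + (-a01*a10*a12*a13*a21*a23*a31*a32 + b00*b11*a12*a13*a21*a23*a31*a32)*hp23
      + (-a03*a12*a13*a21*a23*a30*a31*a32 + b00*a12*a13*a21*a23*a31*a32*b33)*hp12
      + (-b00*a12*a13*a21*a23*a31*a32)*ho0
      + (-b00*a12*a13*a21*a23*a31*a32)*ho0p
      + (-a02*a12*a13*a20*a21*a23*a31*a32 + b00*a12*a13*a21*b22*a23*a31*a32)*hp13
      + (-a12*a13*a21*a23*b23*a31*a32*b32 + a12*a13*a21*b22*a23*a31*a32*b33)*hp01
      + (-a12*a13*a21*a23*a31*a32*b33)*ho3p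
      + (a12*a21*a23*a32)*hk1
      + (a13*a23*a31*a32)*hk3
      + (-a12*a13*a21*b22*a23*a31*a32)*ho2p
      + (-a12*a13*a21*a23*a31*a32*b33)*ho3
      + (a13*a23*a31*a32)*hk4
      + (-a12*a13*b13*a21*a23*a31*b31*a32 + b11*a12*a13*a21*a23*a31*a32*b33)*hp02
      + (-b11*a12*a13*a21*a23*a31*a32)*ho1
      + (a12*a13*a21*a31)*hk5
      + (a12*a21*a23*a32)*hk2
      + (-a12*a13*a21*b22*a23*a31*a32)*ho2
      + (-b11*a12*a13*a21*a23*a31*a32)*ho1p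
      + (-a12*b12*a13*a21*b21*a23*a31*a32 + b11*a12*a13*a21*b22*a23*a31*a32)*hp03
      + (a12*a13*a21*a31)*hk6
  have hkey2 : a10*a21*a31*(a02*a13 - a03*a12) = a01*a12*a13*(a20*a31 - a30*a21) := by
    rcases mul_eq_zero.mp hkey with h | h
    · rcases mul_eq_zero.mp h with h' | h'
      · exact absurd (sub_eq_zero.mp h') hnc
      · exact sub_eq_zero.mp h'
    · exact absurd h (mul_ne_zero ha23 ha32)
  have he1rel : a21*a30*(a02*a13 - a03*a12) = a03*a12*(a20*a31 - a30*a21) := by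
    linear_combination -he1
  have hg : a02*a13 - a03*a12 = 0 := by
    by_contra hg
    have hcontra : a12*a21*(a02*a13 - a03*a12)*(a03*a31*a10 - a01*a13*a30) = 0 := by
      linear_combination (a03*a12)*hkey2 - (a01*a12*a13)*he1rel
    rcases mul_eq_zero.mp hcontra with h | h
    · rcases mul_eq_zero.mp h with h' | h'
      · rcases mul_eq_zero.mp h' with h'' | h''
        · exact ha12 h''
        · exact ha21 h''
      · exact hg h'
    · exact hn2 (sub_eq_zero.mp h).symm
  have hgp : a20*a31 - a30*a21 = 0 := by
    have h2 : a03*a12*(a20*a31 - a30*a21) = 0 := by rw [← he1rel, hg]; ring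
    rcases mul_eq_zero.mp h2 with h | h
    · exact absurd h (mul_ne_zero ha03 ha12)
    · exact h
  exact ⟨sub_eq_zero.mp hg, sub_eq_zero.mp hgp⟩


end Helpers

/-- For `4×4` principal minor equivalent matrices with
`D₁(A,B) = X` and `D₂(A,B) = X̄` (`|X| = 2`), the set `X` is a cut of `A`. -/
theorem cut_of_d1_d2_partition_four {K : Type*} [Field K]
    (A B : Matrix (Fin 4) (Fin 4) K)
    (hA : ∀ i j : Fin 4, i ≠ j → A i j ≠ 0)
    (hPME : PME A B)
    (X : Finset (Fin 4)) (hX : X.card = 2)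
    (hD1 : D1 A B = (X : Set (Fin 4)))
    (hD2 : D2 A B = ((Xᶜ : Finset (Fin 4)) : Set (Fin 4))) :
    IsCut A X := by
  classical
  obtain ⟨i, j, hij, hXij⟩ := Finset.card_eq_two.mp hX
  subst hXij
  have hXc2 : (({i, j} : Finset (Fin 4))ᶜ).card = 2 := by
    rw [Finset.card_compl, hX]
    rfl
  obtain ⟨k, l, hkl, hXc⟩ := Finset.card_eq_two.mp hXc2
  have hkmem : k ∈ ({i, j} : Finset (Fin 4))ᶜ := hXc ▸ Finset.mem_insert_self k {l}
  have hlmem : l ∈ ({i, j} : Finset (Fin 4))ᶜ := hXc ▸ Finset.mem_insert_of_mem (Finset.mem_singleton_self l)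
  have hkX : k ∉ ({i, j} : Finset (Fin 4)) := Finset.mem_compl.mp hkmem
  have hlX : l ∉ ({i, j} : Finset (Fin 4)) := Finset.mem_compl.mp hlmem
  have hki : k ≠ i := fun h => hkX (by rw [h]; exact Finset.mem_insert_self i {j})
  have hkj : k ≠ j := fun h => hkX (by rw [h]; exact Finset.mem_insert_of_mem (Finset.mem_singleton_self j))
  have hli : l ≠ i := fun h => hlX (by rw [h]; exact Finset.mem_insert_self i {j})
  have hlj : l ≠ j := fun h => hlX (by rw [h]; exact Finset.mem_insert_of_mem (Finset.mem_singleton_self j))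
  have hik : i ≠ k := hki.symm
  have hjk : j ≠ k := hkj.symm
  have hil : i ≠ l := hli.symm
  have hjl : j ≠ l := hlj.symm
  have hiX : i ∈ ({i, j} : Finset (Fin 4)) := Finset.mem_insert_self i {j}
  have hjX : j ∈ ({i, j} : Finset (Fin 4)) := Finset.mem_insert_of_mem (Finset.mem_singleton_self j)
  -- DiagSim facts
  have hsimi : DiagSim (subm A {i}ᶜ {i}ᶜ) (subm B {i}ᶜ {i}ᶜ) := by
    have hmem : i ∈ D1 A B := by rw [hD1]; exact_mod_cast hiX
    exact hmem
  have hsimj : DiagSim (subm A {j}ᶜ {j}ᶜ) (subm B {j}ᶜ {j}ᶜ) := by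
    have hmem : j ∈ D1 A B := by rw [hD1]; exact_mod_cast hjX
    exact hmem
  have hsimk : DiagSim (subm A {k}ᶜ {k}ᶜ) (subm B {k}ᶜ {k}ᶜ)ᵀ := by
    have hmem : k ∈ D2 A B := by rw [hD2]; exact_mod_cast hkmem
    exact hmem
  have hsiml : DiagSim (subm A {l}ᶜ {l}ᶜ) (subm B {l}ᶜ {l}ᶜ)ᵀ := by
    have hmem : l ∈ D2 A B := by rw [hD2]; exact_mod_cast hlmem
    exact hmem
  have hnotD2i : ¬ DiagSim (subm A {i}ᶜ {i}ᶜ) (subm B {i}ᶜ {i}ᶜ)ᵀ := by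
    intro h
    have hmem : i ∈ D2 A B := h
    rw [hD2] at hmem
    have : i ∈ ({i, j} : Finset (Fin 4))ᶜ := by exact_mod_cast hmem
    exact Finset.mem_compl.mp this hiX
  have hnotD1k : ¬ DiagSim (subm A {k}ᶜ {k}ᶜ) (subm B {k}ᶜ {k}ᶜ) := by
    intro h
    have hmem : k ∈ D1 A B := h
    rw [hD1] at hmem
    exact hkX (by exact_mod_cast hmem)
  -- index vectors and equivs for the four 3-element complements
  have cardc : ∀ t : Fin 4, ({t}ᶜ : Finset (Fin 4)).card = 3 := by
    intro t; rw [Finset.card_compl]; rfl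
  have memc : ∀ s t : Fin 4, s ≠ t → s ∈ ({t}ᶜ : Finset (Fin 4)) := by
    intro s t h; simpa using h
  have hmi : ∀ x, (![j, k, l] : Fin 3 → Fin 4) x ∈ ({i}ᶜ : Finset (Fin 4)) := by
    intro x; fin_cases x
    · exact memc _ _ hij.symm
    · exact memc _ _ hki
    · exact memc _ _ hli
  have hmj : ∀ x, (![i, k, l] : Fin 3 → Fin 4) x ∈ ({j}ᶜ : Finset (Fin 4)) := by
    intro x; fin_cases x
    · exact memc _ _ hij
    · exact memc _ _ hkj
    · exact memc _ _ hlj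
  have hmk : ∀ x, (![i, j, l] : Fin 3 → Fin 4) x ∈ ({k}ᶜ : Finset (Fin 4)) := by
    intro x; fin_cases x
    · exact memc _ _ hik
    · exact memc _ _ hjk
    · exact memc _ _ hkl.symm
  have hml : ∀ x, (![i, j, k] : Fin 3 → Fin 4) x ∈ ({l}ᶜ : Finset (Fin 4)) := by
    intro x; fin_cases x
    · exact memc _ _ hil
    · exact memc _ _ hjl
    · exact memc _ _ hkl
  let ei : Fin 3 ≃ ↥(({i}ᶜ : Finset (Fin 4))) :=
    finsetEquiv _ ![j, k, l] hmi (inj3 hjk hjl hkl) (cardc i)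
  let ej : Fin 3 ≃ ↥(({j}ᶜ : Finset (Fin 4))) :=
    finsetEquiv _ ![i, k, l] hmj (inj3 hik hil hkl) (cardc j)
  let ek : Fin 3 ≃ ↥(({k}ᶜ : Finset (Fin 4))) :=
    finsetEquiv _ ![i, j, l] hmk (inj3 hij hil hjl) (cardc k)
  let el : Fin 3 ≃ ↥(({l}ᶜ : Finset (Fin 4))) :=
    finsetEquiv _ ![i, j, k] hml (inj3 hij hik hjk) (cardc l)
  have hsimi3 := hsimi.submatrix' ⇑ei
  have hsimj3 := hsimj.submatrix' ⇑ej
  have hsimk3 := hsimk.submatrix' ⇑ek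
  have hsiml3 := hsiml.submatrix' ⇑el
  -- cycle equalities
  have w0 : B j k * B k l * B l j = A j k * A k l * A l j := hsimi3.cycle' 0 1 2
  have w0p : B j l * B l k * B k j = A j l * A l k * A k j := hsimi3.cycle' 0 2 1
  have w1 : B i k * B k l * B l i = A i k * A k l * A l i := hsimj3.cycle' 0 1 2
  have w1p : B i l * B l k * B k i = A i l * A l k * A k i := hsimj3.cycle' 0 2 1
  have w2 : B j i * B l j * B i l = A i j * A j l * A l i := hsimk3.cycle' 0 1 2
  have w2p : B l i * B j l * B i j = A i l * A l j * A j i := hsimk3.cycle' 0 2 1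
  have w3 : B j i * B k j * B i k = A i j * A j k * A k i := hsiml3.cycle' 0 1 2
  have w3p : B k i * B j k * B i j = A i k * A k j * A j i := hsiml3.cycle' 0 2 1
  -- negative conditions
  have hnc : A j k * A k l * A l j ≠ A j l * A l k * A k j := by
    intro heq
    apply hnotD2i
    have h4 : DiagSim ((subm A {i}ᶜ {i}ᶜ).submatrix ⇑ei ⇑ei)
        ((subm B {i}ᶜ {i}ᶜ).submatrix ⇑ei ⇑ei)ᵀ :=
      diagSim_transpose_aux _ _
        (show A j k ≠ 0 from hA j k hjk) (show A j l ≠ 0 from hA j l hjl)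
        (show A k j ≠ 0 from hA k j hjk.symm) (show A l j ≠ 0 from hA l j hjl.symm)
        heq hsimi3
    exact DiagSim.of_equiv ei h4
  have hn2 : A i j * A j l * A l i ≠ A i l * A l j * A j i := by
    intro heq
    apply hnotD1k
    have h4 : DiagSim ((subm A {k}ᶜ {k}ᶜ).submatrix ⇑ek ⇑ek)
        (((subm B {k}ᶜ {k}ᶜ)ᵀ).submatrix ⇑ek ⇑ek)ᵀ :=
      diagSim_transpose_aux _ _
        (show A i j ≠ 0 from hA i j hij) (show A i l ≠ 0 from hA i l hil)
        (show A j i ≠ 0 from hA j i hij.symm) (show A l i ≠ 0 from hA l i hil.symm)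
        heq hsimk3
    exact DiagSim.of_equiv ek h4
  -- PME extractions
  have hdg : ∀ t : Fin 4, A t t = B t t := by
    intro t
    have h := hPME {t} (Finset.singleton_nonempty t)
    rw [pminor_eq A {t} ![t] (by intro x; fin_cases x; simp)
        (fun x y _ => Subsingleton.elim x y) (Finset.card_singleton t),
      pminor_eq B {t} ![t] (by intro x; fin_cases x; simp)
        (fun x y _ => Subsingleton.elim x y) (Finset.card_singleton t),
      Matrix.det_fin_one, Matrix.det_fin_one] at h
    exact h
  have hpr : ∀ p q : Fin 4, p ≠ q →
      A p p * A q q - A p q * A q p = B p p * B q q - B p q * B q p := by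
    intro p q hpq
    have h := hPME {p, q} ⟨p, Finset.mem_insert_self p {q}⟩
    have hc2 : ({p, q} : Finset (Fin 4)).card = 2 := by
      rw [Finset.card_insert_of_notMem (by simp [hpq]), Finset.card_singleton]
    have hm2 : ∀ x, (![p, q] : Fin 2 → Fin 4) x ∈ ({p, q} : Finset (Fin 4)) := by
      intro x; fin_cases x <;> simp
    rw [pminor_eq A {p, q} ![p, q] hm2 (inj2 hpq) hc2,
      pminor_eq B {p, q} ![p, q] hm2 (inj2 hpq) hc2,
      Matrix.det_fin_two, Matrix.det_fin_two] at h
    exact h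
  have hm4 : ∀ x, (![i, j, k, l] : Fin 4 → Fin 4) x ∈ (Finset.univ : Finset (Fin 4)) := by
    intro x; exact Finset.mem_univ _
  have hdet0 := hPME Finset.univ Finset.univ_nonempty
  rw [pminor_eq A Finset.univ ![i, j, k, l] hm4 (inj4 hij hik hil hjk hjl hkl) rfl,
    pminor_eq B Finset.univ ![i, j, k, l] hm4 (inj4 hij hik hil hjk hjl hkl) rfl,
    det_four', det_four'] at hdet0
  have hprij : B i j * B j i = A i j * A j i := by
    linear_combination hpr i j hij - (A j j) * hdg i - (B i i) * hdg j
  have hprik : B i k * B k i = A i k * A k i := by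
    linear_combination hpr i k hik - (A k k) * hdg i - (B i i) * hdg k
  have hpril : B i l * B l i = A i l * A l i := by
    linear_combination hpr i l hil - (A l l) * hdg i - (B i i) * hdg l
  have hprjk : B j k * B k j = A j k * A k j := by
    linear_combination hpr j k hjk - (A k k) * hdg j - (B j j) * hdg k
  have hprjl : B j l * B l j = A j l * A l j := by
    linear_combination hpr j l hjl - (A l l) * hdg j - (B j j) * hdg l
  have hprkl : B k l * B l k = A k l * A l k := by
    linear_combination hpr k l hkl - (A l l) * hdg k - (B k k) * hdg l
  obtain ⟨hg, hgp⟩ :=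
    core (A i i) (A i j) (A i k) (A i l) (A j i) (A j j) (A j k) (A j l) (A k i) (A k j) (A k k) (A k l) (A l i) (A l j) (A l k) (A l l) (B i i) (B i j) (B i k) (B i l) (B j i) (B j j) (B j k) (B j l) (B k i) (B k j) (B k k) (B k l) (B l i) (B l j) (B l k) (B l l)
      (hA i j hij) (hA i k hik) (hA i l hil) (hA j i hij.symm) (hA j k hjk) (hA j l hjl) (hA k i hki) (hA k j hkj) (hA k l hkl) (hA l i hli) (hA l j hlj) (hA l k hkl.symm)
      (hdg i).symm (hdg j).symm (hdg k).symm (hdg l).symm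
      hprij hprik hpril hprjk hprjl hprkl
      w0
      w0p
      w1
      w1p
      (by linear_combination w2 : B j i * B i l * B l j = A i j * A j l * A l i)
      (by linear_combination w2p : B l i * B i j * B j l = A i l * A l j * A j i)
      (by linear_combination w3 : B j i * B i k * B k j = A i j * A j k * A k i)
      (by linear_combination w3p : B k i * B i j * B j k = A i k * A k j * A j i)
      hdet0 hnc hn2
  -- conclude: X = {i,j} is a cut
  have hsd : (Finset.univ : Finset (Fin 4)) \ {i, j} = ({i, j} : Finset (Fin 4))ᶜ :=
    (Finset.compl_eq_univ_sdiff _).symm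
  refine ⟨Finset.subset_univ _, by rw [hX], ?_, ?_, ?_⟩
  · rw [hX, Finset.card_univ, Fintype.card_fin]
  · rw [hsd, hXc]
    refine rank_le_one_of_factor _ (fun p => A p.1 k) (fun q => A i q.1 / A i k) ?_
    rintro ⟨p, hp⟩ ⟨q, hq⟩
    have hAik := hA i k hik
    have hp2 : p = i ∨ p = j := by simpa using hp
    have hq2 : q = k ∨ q = l := by simpa using hq
    show A p q = A p k * (A i q / A i k)
    rcases hp2 with h | h
    · rcases hq2 with h' | h'
      · rw [h, h']; field_simp
      · rw [h, h']; field_simp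
    · rcases hq2 with h' | h'
      · rw [h, h']; field_simp
      · rw [h, h']; field_simp; linear_combination hg
  · rw [hsd, hXc]
    refine rank_le_one_of_factor _ (fun q => A q.1 i) (fun p => A k p.1 / A k i) ?_
    rintro ⟨q, hq⟩ ⟨p, hp⟩
    have hAki := hA k i hki
    have hq2 : q = k ∨ q = l := by simpa using hq
    have hp2 : p = i ∨ p = j := by simpa using hp
    show A q p = A q i * (A k p / A k i)
    rcases hq2 with h | h
    · rcases hp2 with h' | h'
      · rw [h, h']; field_simp
      · rw [h, h']; field_simp
    · rcases hp2 with h' | h'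
      · rw [h, h']; field_simp
      · rw [h, h']; field_simp; linear_combination hgp
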